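/- Let q = 6 + 2√5, σ = (1/√q)·[[1, q−1],[1, −1]] and τ = [[1, 0],[0, −1]]. Then the ring R_{6+2√5} = { f ∈ ℂ[x,y] : f^σ = f and f^τ = f } of polynomials invariant under both σ and τ equals the ℂ-subalgebra of ℂ[x,y] generated by W_{2,q}(x,y) = x² + (5+2√5)y² and ψ₅(x,y) = x⁵ − (50+20√5)x³y² + (225+100√5)xy⁴. -/

import Mathlib

/- STATEMENT 5: the ring R_{6+2√5} of polynomials in ℂ[x,y] invariant under both
σ = (1/√q)[[1,q-1],[1,-1]] (q = 6+2√5) and τ = [[1,0],[0,-1]] equals the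
ℂ-subalgebra generated by W_{2,q} = x² + (5+2√5)y² and
ψ₅ = x⁵ - (50+20√5)x³y² + (225+100√5)xy⁴. -/

noncomputable section

abbrev Cxy : Type := MvPolynomial (Fin 2) ℂ

def qval : ℝ := 6 + 2 * Real.sqrt 5

def sigmaMat : Matrix (Fin 2) (Fin 2) ℝ :=
  (Real.sqrt qval)⁻¹ • !![1, qval - 1; 1, -1]

def tauMat : Matrix (Fin 2) (Fin 2) ℝ := !![1, 0; 0, -1]

/-- The action `f^M(x,y) = f(ax+by, cx+dy)` of a 2×2 real matrix on ℂ[x,y]. -/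
def act (M : Matrix (Fin 2) (Fin 2) ℝ) (f : Cxy) : Cxy :=
  MvPolynomial.aeval
    ![MvPolynomial.C ((M 0 0 : ℂ)) * MvPolynomial.X 0 + MvPolynomial.C ((M 0 1 : ℂ)) * MvPolynomial.X 1,
      MvPolynomial.C ((M 1 0 : ℂ)) * MvPolynomial.X 0 + MvPolynomial.C ((M 1 1 : ℂ)) * MvPolynomial.X 1] f

def sqrt5C : ℂ := (Real.sqrt 5 : ℝ)

def W2q : Cxy :=
  MvPolynomial.X 0 ^ 2 + MvPolynomial.C (5 + 2 * sqrt5C) * MvPolynomial.X 1 ^ 2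

def psi5 : Cxy :=
  MvPolynomial.X 0 ^ 5
    - MvPolynomial.C (50 + 20 * sqrt5C) * MvPolynomial.X 0 ^ 3 * MvPolynomial.X 1 ^ 2
    + MvPolynomial.C (225 + 100 * sqrt5C) * MvPolynomial.X 0 * MvPolynomial.X 1 ^ 4

open MvPolynomial

-- scalar layer (tested)
lemma s5_sq : Real.sqrt 5 ^ 2 = 5 := Real.sq_sqrt (by norm_num)
lemma sqrt_qval : Real.sqrt qval = 1 + Real.sqrt 5 := by
  rw [show qval = (1 + Real.sqrt 5)^2 from by rw [qval, add_sq]; nlinarith [s5_sq]]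
  exact Real.sqrt_sq (by positivity)
def cR : ℝ := Real.sqrt (5 + 2 * Real.sqrt 5)
lemma cR_sq : cR ^ 2 = 5 + 2 * Real.sqrt 5 := Real.sq_sqrt (by positivity)
lemma cR_pos : 0 < cR := Real.sqrt_pos.2 (by positivity)
def sR : ℝ := (Real.sqrt qval)⁻¹
lemma sR_mul : sR * (1 + Real.sqrt 5) = 1 := by rw [sR, sqrt_qval]; field_simp
lemma sR_pos : 0 < sR := by rw [sR, sqrt_qval]; positivity
def s5 : ℂ := sqrt5C
def icC : ℂ := Complex.I * (cR : ℂ)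
def sC : ℂ := (sR : ℝ)
def zet : ℂ := sC * (1 + icC)
def zet' : ℂ := sC * (1 - icC)
lemma hs5 : s5 ^ 2 = 5 := by
  rw [s5, sqrt5C, ← Complex.ofReal_pow, s5_sq]; norm_num
lemma hic : icC ^ 2 = -(5 + 2 * s5) := by
  rw [icC, s5, sqrt5C, mul_pow, Complex.I_sq, ← Complex.ofReal_pow, cR_sq]
  push_cast; ring
lemma hsC : sC * (1 + s5) = 1 := by
  rw [sC, s5, sqrt5C]; exact_mod_cast congrArg (Complex.ofReal) sR_mul
lemma e4 : icC ^ 4 = 45 + 20 * s5 := by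
  rw [show icC^4 = (icC^2)^2 from by ring, hic]; linear_combination 4*hs5
lemma e5 : (1 + icC) ^ 5 = 176 + 80 * s5 := by
  linear_combination (10 + 10*icC)*hic + (5+icC)*e4
lemma e5' : (1 - icC) ^ 5 = 176 + 80 * s5 := by
  linear_combination (10 - 10*icC)*hic + (5-icC)*e4
lemma e6 : (1 + s5) ^ 5 = 176 + 80 * s5 := by
  linear_combination (10 + 10*s5 + 5*(s5^2+5) + s5*(s5^2+5))*hs5
lemma hz5 : zet ^ 5 = 1 := by
  calc zet^5 = sC^5 * (1+icC)^5 := by rw [zet]; ring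
  _ = sC^5 * ((1+s5)^5) := by rw [e5, e6]
  _ = (sC*(1+s5))^5 := by ring
  _ = 1 := by rw [hsC]; norm_num
lemma hz'5 : zet' ^ 5 = 1 := by
  calc zet'^5 = sC^5 * (1-icC)^5 := by rw [zet']; ring
  _ = sC^5 * ((1+s5)^5) := by rw [e5', e6]
  _ = (sC*(1+s5))^5 := by ring
  _ = 1 := by rw [hsC]; norm_num
lemma hzz' : zet * zet' = 1 := by
  calc zet * zet' = sC^2 * (1 - icC^2) := by rw [zet, zet']; ring
  _ = sC^2 * ((1+s5)^2) := by rw [hic]; linear_combination (-(sC^2)) * hs5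
  _ = (sC*(1+s5))^2 := by ring
  _ = 1 := by rw [hsC]; norm_num
lemma zet_ne_one : zet ≠ 1 := by
  intro h
  have : zet.im = 0 := by rw [h]; simp
  rw [zet, sC, icC] at this
  simp [Complex.ofReal_mul] at this
  rcases this with h' | h'
  · exact absurd h' (ne_of_gt sR_pos)
  · exact absurd h' (ne_of_gt cR_pos)
lemma order_zet : orderOf zet = 5 :=
  haveI : Fact (Nat.Prime 5) := ⟨by norm_num⟩
  orderOf_eq_prime hz5 zet_ne_one
lemma zet_ne_zero : zet ≠ 0 := by
  intro h; have h2 := hzz'; rw [h, zero_mul] at h2; exact one_ne_zero h2.symm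

-- polynomial layer
def Ehom : Cxy →ₐ[ℂ] Cxy :=
  aeval ![X 0 + C icC * X 1, X 0 - C icC * X 1]
def Einv : Cxy →ₐ[ℂ] Cxy :=
  aeval ![C (2⁻¹ : ℂ) * (X 0 + X 1), C ((2 * icC)⁻¹) * (X 0 - X 1)]
def Rot : Cxy →ₐ[ℂ] Cxy := aeval ![C zet * X 0, C zet' * X 1]
def Sw : Cxy →ₐ[ℂ] Cxy := rename (Equiv.swap 0 1)
def actHom (M : Matrix (Fin 2) (Fin 2) ℝ) : Cxy →ₐ[ℂ] Cxy :=
  aeval ![C ((M 0 0 : ℂ)) * X 0 + C ((M 0 1 : ℂ)) * X 1,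
          C ((M 1 0 : ℂ)) * X 0 + C ((M 1 1 : ℂ)) * X 1]
lemma act_eq (M : Matrix (Fin 2) (Fin 2) ℝ) (f : Cxy) : act M f = actHom M f := rfl

lemma icC_ne : icC ≠ 0 := by
  rw [icC]
  exact mul_ne_zero Complex.I_ne_zero (by exact_mod_cast ne_of_gt cR_pos)

lemma hsumC : (C (2⁻¹:ℂ) : Cxy) + C icC * C ((2*icC)⁻¹) = 1 := by
  rw [← C_mul, ← C_add, show (2⁻¹:ℂ) + icC*(2*icC)⁻¹ = 1 from by field_simp [icC_ne]; ring, C_1]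
lemma hdiffC : (C (2⁻¹:ℂ) : Cxy) - C icC * C ((2*icC)⁻¹) = 0 := by
  rw [← C_mul, ← C_sub, show (2⁻¹:ℂ) - icC*(2*icC)⁻¹ = 0 from by field_simp [icC_ne]; ring, C_0]

lemma EinvE (p : Cxy) : Einv (Ehom p) = p := by
  have h : Einv.comp Ehom = AlgHom.id ℂ Cxy := by
    apply MvPolynomial.algHom_ext
    intro i
    fin_cases i <;>
      simp only [AlgHom.comp_apply, AlgHom.id_apply, Ehom, Einv, aeval_X, map_add, map_sub,
        map_mul, aeval_C, algebraMap_eq, Matrix.cons_val_zero, Matrix.cons_val_one,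
        Matrix.head_cons, Fin.isValue, Fin.zero_eta, Fin.mk_one]
    · linear_combination (X 0 : Cxy) * hsumC + (X 1 : Cxy) * hdiffC
    · linear_combination (X 0 : Cxy) * hdiffC + (X 1 : Cxy) * hsumC
  exact AlgHom.congr_fun h p

lemma EEinv (p : Cxy) : Ehom (Einv p) = p := by
  have h1C : (C (2⁻¹:ℂ) : Cxy) * 2 = 1 := by
    rw [show (2:Cxy) = C 2 from (map_ofNat C 2).symm, ← C_mul]; norm_num
  have h2C : (C ((2*icC)⁻¹) : Cxy) * (2 * C icC) = 1 := by
    rw [show (2:Cxy) = C 2 from (map_ofNat C 2).symm, ← C_mul, ← C_mul,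
      show (2*icC)⁻¹ * (2*icC) = 1 from by field_simp [icC_ne], C_1]
  have h : Ehom.comp Einv = AlgHom.id ℂ Cxy := by
    apply MvPolynomial.algHom_ext
    intro i
    fin_cases i <;>
      simp only [AlgHom.comp_apply, AlgHom.id_apply, Ehom, Einv, aeval_X, map_add, map_sub,
        map_mul, aeval_C, algebraMap_eq, Matrix.cons_val_zero, Matrix.cons_val_one,
        Matrix.head_cons, Fin.isValue, Fin.zero_eta, Fin.mk_one]
    · linear_combination (X 0 : Cxy) * h1C
    · linear_combination (X 1 : Cxy) * h2C
  exact AlgHom.congr_fun h p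
lemma qvalC : ((qval : ℝ) : ℂ) = 6 + 2 * s5 := by
  rw [qval, s5, sqrt5C]; push_cast; ring

lemma sigma00 : sigmaMat 0 0 = sR := by simp [sigmaMat, sR]
lemma sigma01 : sigmaMat 0 1 = sR * (qval - 1) := by simp [sigmaMat, sR]
lemma sigma10 : sigmaMat 1 0 = sR := by simp [sigmaMat, sR]
lemma sigma11 : sigmaMat 1 1 = -sR := by simp [sigmaMat, sR]

lemma L2 : (actHom tauMat).comp Ehom = Ehom.comp Sw := by
  apply MvPolynomial.algHom_ext
  intro i
  fin_cases i <;>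
    simp [actHom, Ehom, Sw, tauMat, aeval_X, map_add, map_sub, map_mul, aeval_C,
      algebraMap_eq, rename_X] <;> ring

lemma L1 : (actHom sigmaMat).comp Ehom = Ehom.comp (Sw.comp Rot) := by
  have hA : ((sR:ℝ):ℂ) + icC * ((sR:ℝ):ℂ) = zet := by rw [zet, sC]; ring
  have hB : ((sR:ℝ):ℂ) * ((6 + 2*s5) - 1) + icC * (-((sR:ℝ):ℂ)) = zet * (-icC) := by
    rw [zet, sC]; linear_combination (((sR:ℝ):ℂ)) * hic
  have hA' : ((sR:ℝ):ℂ) - icC * ((sR:ℝ):ℂ) = zet' := by rw [zet', sC]; ring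
  have hB' : ((sR:ℝ):ℂ) * ((6 + 2*s5) - 1) - icC * (-((sR:ℝ):ℂ)) = zet' * icC := by
    rw [zet', sC]; linear_combination (((sR:ℝ):ℂ)) * hic
  apply MvPolynomial.algHom_ext
  intro i
  have hA2 := congrArg (C : ℂ → Cxy) hA
  have hB2 := congrArg (C : ℂ → Cxy) hB
  have hA2' := congrArg (C : ℂ → Cxy) hA'
  have hB2' := congrArg (C : ℂ → Cxy) hB'
  simp only [C_add, C_mul, C_neg, C_sub, C_1, map_ofNat] at hA2 hB2 hA2' hB2'
  fin_cases i
  · simp only [AlgHom.comp_apply, Ehom, Sw, Rot, actHom, aeval_X, map_add, map_sub,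
        map_mul, aeval_C, algebraMap_eq, rename_X, rename_C, C_mul, C_neg, Matrix.cons_val_zero,
        Matrix.cons_val_one, Matrix.head_cons, Fin.isValue, Fin.zero_eta, Fin.mk_one,
        sigma00, sigma01, sigma10, sigma11, Equiv.swap_apply_left, Equiv.swap_apply_right]
    push_cast [qvalC]
    simp only [C_mul, C_add, C_sub, C_neg, C_1, map_ofNat]
    linear_combination (X 0 : Cxy) * hA2 + (X 1 : Cxy) * hB2
  · simp only [AlgHom.comp_apply, Ehom, Sw, Rot, actHom, aeval_X, map_add, map_sub,
        map_mul, aeval_C, algebraMap_eq, rename_X, rename_C, C_mul, C_neg, Matrix.cons_val_zero,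
        Matrix.cons_val_one, Matrix.head_cons, Fin.isValue, Fin.zero_eta, Fin.mk_one,
        sigma00, sigma01, sigma10, sigma11, Equiv.swap_apply_left, Equiv.swap_apply_right]
    push_cast [qvalC]
    simp only [C_mul, C_add, C_sub, C_neg, C_1, map_ofNat]
    linear_combination (X 0 : Cxy) * hA2' + (X 1 : Cxy) * hB2'

lemma Cic2 : (C icC : Cxy)^2 = -(5 + 2 * C s5) := by
  have := congrArg (C : ℂ → Cxy) hic
  simpa [C_pow, C_neg, C_add, C_mul, map_ofNat] using this
lemma Cic4 : (C icC : Cxy)^4 = 45 + 20 * C s5 := by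
  have := congrArg (C : ℂ → Cxy) e4
  simpa [C_pow, C_add, C_mul, map_ofNat] using this
lemma C2inv : (C (2⁻¹:ℂ) : Cxy) * 2 = 1 := by
  rw [show (2:Cxy) = C 2 from (map_ofNat C 2).symm, ← C_mul]; norm_num

lemma Ehom_W : Ehom (X 0 * X 1) = W2q := by
  simp only [Ehom, map_mul, aeval_X, Matrix.cons_val_zero, Matrix.cons_val_one, Matrix.head_cons]
  rw [W2q, show sqrt5C = s5 from rfl]
  simp only [C_add, C_mul, map_ofNat]
  linear_combination (-(X 1 : Cxy)^2) * Cic2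

lemma Ehom_psi : Ehom (C (2⁻¹:ℂ) * (X 0 ^ 5 + X 1 ^ 5)) = psi5 := by
  simp only [Ehom, map_mul, map_add, map_pow, aeval_X, aeval_C, algebraMap_eq,
    Matrix.cons_val_zero, Matrix.cons_val_one, Matrix.head_cons]
  rw [psi5, show sqrt5C = s5 from rfl]
  simp only [C_add, C_mul, map_ofNat]
  linear_combination (X 0^5 - (50+20*(C s5 : Cxy))*X 0^3*X 1^2 + (225+100*C s5)*X 0*X 1^4) * C2inv
    + (20*(C (2⁻¹:ℂ) : Cxy)*X 0^3*X 1^2) * Cic2 + (10*(C (2⁻¹:ℂ) : Cxy)*X 0*X 1^4) * Cic4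

lemma Sw_Sw (g : Cxy) : Sw (Sw g) = g := by
  rw [Sw, rename_rename]
  rw [show (⇑(Equiv.swap (0:Fin 2) 1) ∘ ⇑(Equiv.swap (0:Fin 2) 1)) = id from
    funext fun x => Equiv.swap_apply_self _ _ _]
  exact AlgHom.congr_fun rename_id g

lemma monomial_two (d : Fin 2 →₀ ℕ) (c : ℂ) :
    (monomial d c : Cxy) = C c * X 0 ^ (d 0) * X 1 ^ (d 1) := by
  rw [monomial_eq, Finsupp.prod_fintype _ _ (fun i => pow_zero _)]
  rw [Fin.prod_univ_two, mul_assoc]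

lemma Rot_monomial (d : Fin 2 →₀ ℕ) (c : ℂ) :
    Rot (monomial d c) = monomial d (zet ^ (d 0) * zet' ^ (d 1) * c) := by
  rw [monomial_two, monomial_two]
  simp only [Rot, map_mul, map_pow, aeval_X, aeval_C, algebraMap_eq,
    Matrix.cons_val_zero, Matrix.cons_val_one, Matrix.head_cons]
  rw [mul_pow, mul_pow, ← C_pow, ← C_pow]
  ring

lemma coeff_Rot (g : Cxy) (m : Fin 2 →₀ ℕ) :
    coeff m (Rot g) = zet ^ (m 0) * zet' ^ (m 1) * coeff m g := by
  induction g using MvPolynomial.induction_on' with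
  | monomial d c =>
    rw [Rot_monomial, coeff_monomial, coeff_monomial]
    split
    · next h => subst h; ring
    · ring
  | add p q hp hq => rw [map_add, coeff_add, coeff_add, hp, hq]; ring

lemma Sw_monomial (d : Fin 2 →₀ ℕ) (c : ℂ) :
    Sw (monomial d c : Cxy) = C c * X 0 ^ (d 1) * X 1 ^ (d 0) := by
  rw [Sw, rename_monomial, monomial_two]
  rw [Finsupp.mapDomain_equiv_apply, Finsupp.mapDomain_equiv_apply]
  simp [Equiv.symm_swap, Equiv.swap_apply_left, Equiv.swap_apply_right]
def A0 : Subalgebra ℂ Cxy := Algebra.adjoin ℂ ({X 0 * X 1, X 0 ^ 5 + X 1 ^ 5} : Set Cxy)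

lemma gen1_mem : (X 0 * X 1 : Cxy) ∈ A0 := Algebra.subset_adjoin (Set.mem_insert _ _)
lemma gen2_mem : (X 0 ^ 5 + X 1 ^ 5 : Cxy) ∈ A0 :=
  Algebra.subset_adjoin (Set.mem_insert_of_mem _ rfl)
lemma C_mem (c : ℂ) : (C c : Cxy) ∈ A0 := by
  rw [← algebraMap_eq]; exact A0.algebraMap_mem c

lemma pow5mem : ∀ k : ℕ, (X 0 ^ (5*k) + X 1 ^ (5*k) : Cxy) ∈ A0 := by
  intro k
  induction k using Nat.strong_induction_on with
  | _ k ih =>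
    match k with
    | 0 => simpa using add_mem A0.one_mem A0.one_mem
    | 1 => simpa using gen2_mem
    | (k+2) =>
      have e : (X 0 ^ (5*(k+2)) + X 1 ^ (5*(k+2)) : Cxy)
          = (X 0 ^ 5 + X 1 ^ 5) * (X 0 ^ (5*(k+1)) + X 1 ^ (5*(k+1)))
            - (X 0 * X 1)^5 * (X 0 ^ (5*k) + X 1 ^ (5*k)) := by ring
      rw [e]
      exact sub_mem (mul_mem gen2_mem (ih (k+1) (by omega)))
        (mul_mem (pow_mem gen1_mem 5) (ih k (by omega)))

lemma pairMemAux (a k : ℕ) : (X 0 ^ a * X 1 ^ (a + 5*k) + X 0 ^ (a + 5*k) * X 1 ^ a : Cxy) ∈ A0 := by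
  have e : (X 0 ^ a * X 1 ^ (a + 5*k) + X 0 ^ (a + 5*k) * X 1 ^ a : Cxy)
      = (X 0 * X 1)^a * (X 0 ^ (5*k) + X 1 ^ (5*k)) := by rw [pow_add, pow_add]; ring
  rw [e]; exact mul_mem (pow_mem gen1_mem a) (pow5mem k)

lemma zet_diff (a b : ℕ) (hab : a ≤ b) (h : zet ^ a = zet ^ b) : ∃ k, b = a + 5*k := by
  have h2 : zet ^ a * zet ^ (b - a) = zet ^ a * 1 := by
    rw [mul_one, ← pow_add]; rw [show a + (b-a) = b from by omega]; exact h.symm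
  have h3 : zet ^ (b - a) = 1 := mul_left_cancel₀ (pow_ne_zero a zet_ne_zero) h2
  have h4 : (5:ℕ) ∣ (b - a) := order_zet ▸ orderOf_dvd_of_pow_eq_one h3
  obtain ⟨k, hk⟩ := h4
  exact ⟨k, by omega⟩

lemma pairMem (a b : ℕ) (h : zet ^ a = zet ^ b) :
    (X 0 ^ a * X 1 ^ b + X 0 ^ b * X 1 ^ a : Cxy) ∈ A0 := by
  rcases le_total a b with hab | hab
  · obtain ⟨k, rfl⟩ := zet_diff a b hab h
    exact pairMemAux a k
  · obtain ⟨k, rfl⟩ := zet_diff b a hab h.symm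
    rw [add_comm]
    exact pairMemAux b k

lemma invariant_mem (g : Cxy) (hR : Rot g = g) (hS : Sw g = g) : g ∈ A0 := by
  have hg : g = C (2⁻¹:ℂ) * (g + Sw g) := by
    rw [hS]; linear_combination (norm := ring) (-g) * C2inv
  rw [hg]
  refine mul_mem (C_mem _) ?_
  have hsum : g + Sw g
      = ∑ m ∈ g.support, ((monomial m (coeff m g)) + Sw (monomial m (coeff m g))) := by
    rw [Finset.sum_add_distrib, support_sum_monomial_coeff, ← map_sum,
      support_sum_monomial_coeff]
  rw [hsum]
  refine Subalgebra.sum_mem A0 fun m hm => ?_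
  -- each term
  have hcoeff : zet ^ (m 0) = zet ^ (m 1) := by
    have h := coeff_Rot g m
    rw [hR] at h
    have hc : coeff m g ≠ 0 := mem_support_iff.mp hm
    have h1 : zet ^ (m 0) * zet' ^ (m 1) = 1 := by
      apply mul_right_cancel₀ hc
      rw [one_mul]; exact h.symm
    calc zet ^ (m 0) = (zet ^ (m 0) * zet' ^ (m 1)) * zet ^ (m 1) := by
          rw [show zet ^ (m 0) * zet' ^ (m 1) * zet ^ (m 1)
              = zet ^ (m 0) * ((zet * zet') ^ (m 1)) from by ring, hzz', one_pow, mul_one]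
      _ = zet ^ (m 1) := by rw [h1, one_mul]
  rw [Sw_monomial, monomial_two]
  have e : (C (coeff m g) * X 0 ^ (m 0) * X 1 ^ (m 1) + C (coeff m g) * X 0 ^ (m 1) * X 1 ^ (m 0) : Cxy)
      = C (coeff m g) * (X 0 ^ (m 0) * X 1 ^ (m 1) + X 0 ^ (m 1) * X 1 ^ (m 0)) := by ring
  rw [e]
  exact mul_mem (C_mem _) (pairMem _ _ hcoeff)
lemma hzC5 : (C zet : Cxy)^5 = 1 := by rw [← C_pow, hz5, C_1]
lemma hz'C5 : (C zet' : Cxy)^5 = 1 := by rw [← C_pow, hz'5, C_1]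
lemma hzzC : (C zet : Cxy) * C zet' = 1 := by rw [← C_mul, hzz', C_1]

lemma SwRot_W : Sw (Rot (X 0 * X 1 : Cxy)) = X 0 * X 1 := by
  simp only [Rot, Sw, map_mul, aeval_X, rename_X, rename_C, aeval_C, algebraMap_eq,
    Matrix.cons_val_zero, Matrix.cons_val_one, Matrix.head_cons,
    Equiv.swap_apply_left, Equiv.swap_apply_right]
  linear_combination (X 0 * X 1 : Cxy) * hzzC

lemma SwRot_psi : Sw (Rot (C (2⁻¹:ℂ) * (X 0^5 + X 1^5) : Cxy)) = C (2⁻¹:ℂ) * (X 0^5 + X 1^5) := by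
  simp only [Rot, Sw, map_mul, map_add, map_pow, aeval_X, rename_X, rename_C, aeval_C,
    algebraMap_eq, Matrix.cons_val_zero, Matrix.cons_val_one, Matrix.head_cons,
    Equiv.swap_apply_left, Equiv.swap_apply_right]
  rw [mul_pow, mul_pow, hzC5, hz'C5]
  ring

lemma Sw_W : Sw (X 0 * X 1 : Cxy) = X 0 * X 1 := by
  simp only [Sw, map_mul, rename_X, Equiv.swap_apply_left, Equiv.swap_apply_right]
  ring

lemma Sw_psi : Sw (C (2⁻¹:ℂ) * (X 0^5 + X 1^5) : Cxy) = C (2⁻¹:ℂ) * (X 0^5 + X 1^5) := by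
  simp only [Sw, map_mul, map_add, map_pow, rename_X, rename_C,
    Equiv.swap_apply_left, Equiv.swap_apply_right]
  ring

lemma sigma_W : actHom sigmaMat W2q = W2q := by
  rw [← Ehom_W]
  have h := AlgHom.congr_fun L1 (X 0 * X 1)
  simp only [AlgHom.comp_apply] at h
  rw [h, SwRot_W]

lemma tau_W : actHom tauMat W2q = W2q := by
  rw [← Ehom_W]
  have h := AlgHom.congr_fun L2 (X 0 * X 1)
  simp only [AlgHom.comp_apply] at h
  rw [h, Sw_W]

lemma sigma_psi : actHom sigmaMat psi5 = psi5 := by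
  rw [← Ehom_psi]
  have h := AlgHom.congr_fun L1 (C (2⁻¹:ℂ) * (X 0^5 + X 1^5))
  simp only [AlgHom.comp_apply] at h
  rw [h, SwRot_psi]

lemma tau_psi : actHom tauMat psi5 = psi5 := by
  rw [← Ehom_psi]
  have h := AlgHom.congr_fun L2 (C (2⁻¹:ℂ) * (X 0^5 + X 1^5))
  simp only [AlgHom.comp_apply] at h
  rw [h, Sw_psi]


set_option maxHeartbeats 1000000 in
theorem invariant_ring_eq_adjoin :
    {f : Cxy | act sigmaMat f = f ∧ act tauMat f = f}
      = (Algebra.adjoin ℂ ({W2q, psi5} : Set Cxy) : Subalgebra ℂ Cxy) := by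
  have hinj : Function.Injective (Ehom : Cxy → Cxy) := Function.LeftInverse.injective EinvE
  apply Set.eq_of_subset_of_subset
  · rintro f ⟨hσ, hτ⟩
    rw [act_eq] at hσ hτ
    set g := Einv f with hgdef
    have hf2 : Ehom g = f := EEinv f
    have hS : Sw g = g := by
      apply hinj
      have h := AlgHom.congr_fun L2 g
      simp only [AlgHom.comp_apply] at h
      rw [← h, hf2, hτ, ← hf2]
    have hR : Rot g = g := by
      have h := AlgHom.congr_fun L1 g
      simp only [AlgHom.comp_apply] at h
      rw [hf2, hσ, ← hf2] at h
      have h2 : Sw (Rot g) = g := hinj h.symm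
      calc Rot g = Sw (Sw (Rot g)) := (Sw_Sw _).symm
        _ = Sw g := by rw [h2]
        _ = g := hS
    have hmem : g ∈ A0 := invariant_mem g hR hS
    rw [SetLike.mem_coe, ← hf2]
    have hle : A0 ≤ (Algebra.adjoin ℂ ({W2q, psi5} : Set Cxy)).comap (Ehom : Cxy →ₐ[ℂ] Cxy) := by
      apply Algebra.adjoin_le
      rintro p hp
      simp only [Set.mem_insert_iff, Set.mem_singleton_iff] at hp
      rcases hp with rfl | rfl
      · rw [SetLike.mem_coe, Subalgebra.mem_comap, Ehom_W]
        exact Algebra.subset_adjoin (Set.mem_insert _ _)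
      · rw [SetLike.mem_coe, Subalgebra.mem_comap]
        have e : (X 0^5 + X 1^5 : Cxy) = C (2:ℂ) * (C (2⁻¹:ℂ) * (X 0^5 + X 1^5)) := by
          rw [← mul_assoc, ← C_mul]; norm_num
        have eC : Ehom (C (2:ℂ)) = C (2:ℂ) := by
          simp [Ehom, aeval_C, algebraMap_eq]
        rw [e, map_mul, Ehom_psi, eC]
        exact mul_mem (by rw [← algebraMap_eq]; exact Subalgebra.algebraMap_mem _ _)
          (Algebra.subset_adjoin (Set.mem_insert_of_mem _ rfl))
    have hfin := hle hmem
    rw [Subalgebra.mem_comap] at hfin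
    exact hfin
  · intro f hf
    rw [SetLike.mem_coe] at hf
    have hle : Algebra.adjoin ℂ ({W2q, psi5} : Set Cxy) ≤
        AlgHom.equalizer (actHom sigmaMat) (AlgHom.id ℂ Cxy)
          ⊓ AlgHom.equalizer (actHom tauMat) (AlgHom.id ℂ Cxy) := by
      apply Algebra.adjoin_le
      rintro p hp
      simp only [Set.mem_insert_iff, Set.mem_singleton_iff] at hp
      rcases hp with rfl | rfl
      · exact ⟨sigma_W, tau_W⟩
      · exact ⟨sigma_psi, tau_psi⟩
    obtain ⟨h1, h2⟩ := hle hf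
    exact ⟨by rw [act_eq]; exact h1, by rw [act_eq]; exact h2⟩
end
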